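/- Let F be a finite field, let k ≥ 1 and t < k be natural numbers, let x_1, …, x_t be pairwise distinct nonzero elements of F, let y_1, …, y_t be elements of F, and let s be any element of F. Then the set of polynomials f over F with degree strictly less than k satisfying f(0) = s and f(x_i) = y_i for all i = 1, …, t has cardinality |F|^(k−1−t). In particular, fewer than k shares of a Shamir secret sharing are consistent with every possible secret in exactly the same number of ways, so they reveal nothing about the secret. -/

import Mathlib

open Polynomial


/-- Shamir hiding: fewer than `k` shares are consistent with every possible
secret in exactly `|F|^(k-1-t)` ways, so they reveal nothing about the secret. -/
theorem shamir_hiding (F : Type*) [Field F] [Fintype F] (k t : ℕ)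
    (hk : 1 ≤ k) (ht : t < k) (x : Fin t → F) (hx : Function.Injective x)
    (hx0 : ∀ i, x i ≠ 0) (y : Fin t → F) (s : F) :
    Nat.card {f : Polynomial F //
        f.degree < (k : ℕ) ∧ f.eval 0 = s ∧ ∀ i, f.eval (x i) = y i} =
      Fintype.card F ^ (k - 1 - t) := by
  classical
  -- combined points and values
  set z : Fin (t + 1) → F := Fin.cases 0 x with hz
  set w : Fin (t + 1) → F := Fin.cases s y with hw
  have hzinj : Function.Injective z := by
    intro i j hij
    induction i using Fin.cases <;> induction j using Fin.cases <;>
      simp_all [hz] <;>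
    first
      | exact (hx0 _ hij.symm).elim
      | exact (hx0 _ hij).elim
      | exact hx hij
      | exact (hx0 _ rfl).elim
  -- the evaluation linear map
  set V := Polynomial.degreeLT F k with hV
  set φ : V →ₗ[F] (Fin (t + 1) → F) :=
    LinearMap.pi (fun i => (Polynomial.leval (z i)).comp V.subtype) with hφ
  haveI : Finite V := Finite.of_equiv _ (Polynomial.degreeLTEquiv F k).symm.toEquiv
  haveI : FiniteDimensional F V := (Polynomial.degreeLTEquiv F k).symm.finiteDimensional
  have hφ_apply : ∀ (v : V) i, φ v i = Polynomial.eval (z i) (v : Polynomial F) := by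
    intro v i; rfl
  -- a particular solution
  have hzinjOn : Set.InjOn z (Finset.univ : Finset (Fin (t+1))) := hzinj.injOn
  have hLdeg : (Lagrange.interpolate Finset.univ z w).degree < (k : ℕ) := by
    refine lt_of_lt_of_le (Lagrange.degree_interpolate_lt _ hzinjOn) ?_
    simp only [Finset.card_univ, Fintype.card_fin]
    exact_mod_cast ht
  set v₀ : V := ⟨Lagrange.interpolate Finset.univ z w, Polynomial.mem_degreeLT.2 hLdeg⟩ with hv₀
  have hφv₀ : φ v₀ = w := by
    funext i
    rw [hφ_apply]
    exact Lagrange.eval_interpolate_at_node _ hzinjOn (Finset.mem_univ i)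
  -- surjectivity of φ
  have hsurj : Function.Surjective φ := by
    intro r
    refine ⟨⟨Lagrange.interpolate Finset.univ z r, Polynomial.mem_degreeLT.2 ?_⟩, ?_⟩
    · refine lt_of_lt_of_le (Lagrange.degree_interpolate_lt _ hzinjOn) ?_
      simp only [Finset.card_univ, Fintype.card_fin]
      exact_mod_cast ht
    · funext i
      rw [hφ_apply]
      exact Lagrange.eval_interpolate_at_node _ hzinjOn (Finset.mem_univ i)
  -- the solution set ≃ fiber ≃ kernel
  have e1 : {f : Polynomial F //
        f.degree < (k : ℕ) ∧ f.eval 0 = s ∧ ∀ i, f.eval (x i) = y i} ≃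
      {v : V // φ v = w} := by
    refine ⟨fun f => ⟨⟨f.1, Polynomial.mem_degreeLT.2 f.2.1⟩, ?_⟩,
      fun v => ⟨v.1.1, Polynomial.mem_degreeLT.1 v.1.2, ?_, ?_⟩, fun f => rfl, fun v => rfl⟩
    · funext i
      rw [hφ_apply]
      induction i using Fin.cases with
      | zero => simpa [hz, hw] using f.2.2.1
      | succ j => simpa [hz, hw] using f.2.2.2 j
    · have := congrFun v.2 0
      rw [hφ_apply] at this
      simpa [hz, hw] using this
    · intro i
      have := congrFun v.2 i.succ
      rw [hφ_apply] at this
      simpa [hz, hw] using this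
  have e2 : {v : V // φ v = w} ≃ LinearMap.ker φ := by
    refine ⟨fun v => ⟨v.1 - v₀, ?_⟩, fun u => ⟨u.1 + v₀, ?_⟩, fun v => by simp, fun u => by simp⟩
    · rw [LinearMap.mem_ker, map_sub, v.2, hφv₀, sub_self]
    · rw [map_add, hφv₀, LinearMap.mem_ker.1 u.2, zero_add]
  rw [Nat.card_congr (e1.trans e2)]
  haveI : Fintype (LinearMap.ker φ) := Fintype.ofFinite _
  -- dimension count
  have hdimV : Module.finrank F V = k := by
    rw [(Polynomial.degreeLTEquiv F k).finrank_eq]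
    simp
  have hrange : Module.finrank F (LinearMap.range φ) = t + 1 := by
    rw [LinearMap.range_eq_top.2 hsurj, finrank_top]
    simp
  have hker : Module.finrank F (LinearMap.ker φ) = k - 1 - t := by
    have := LinearMap.finrank_range_add_finrank_ker φ
    rw [hdimV, hrange] at this
    omega
  rw [Nat.card_eq_fintype_card, Module.card_eq_pow_finrank (K := F), hker]
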